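/- Let U = (U_i)_{i∈I} be a moderate admissible covering of X and w a continuous weight whose associated weight m := m_w is admissible and satisfies the m-cover condition for U. For a sequence (λ_i)_{i∈I} of nonnegative reals set λ_i^+ := Σ_{j ∈ i*} λ_j where i* := {j ∈ I : U_i ∩ U_j ≠ ∅}. Then for each 1 ≤ p ≤ ∞ there exists a constant C > 0 such that ‖Σ_{i∈I} λ_i^+ μ(U_i)^{-1} χ_{U_i}‖_{L^p_w} ≤ C · ‖Σ_{i∈I} λ_i μ(U_i)^{-1} χ_{U_i}‖_{L^p_w} for all such sequences. -/

import Mathlib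

open MeasureTheory ENNReal
open scoped ENNReal NNReal

noncomputable section

/-- The weight on `X × X` associated to a weight `w` on `X`. -/
def mw {X : Type*} (w : X → ℝ) (x y : X) : ℝ :=
  max (w x / w y) (w y / w x)

/-- A moderate admissible covering `U = (U_i)_{i∈I}` of `X`. -/
structure ModCover (X : Type*) [TopologicalSpace X] [MeasurableSpace X]
    (μ : MeasureTheory.Measure X) (I : Type*) where
  U : I → Set X
  measU : ∀ i, MeasurableSet (U i)
  relCompact : ∀ i, IsCompact (closure (U i))
  interiorNonempty : ∀ i, (interior (U i)).Nonempty
  covers : (⋃ i, U i) = Set.univ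
  N : ℕ
  overlapFin : ∀ j : I, {i : I | (U i ∩ U j).Nonempty}.Finite
  overlapBound : ∀ j : I, {i : I | (U i ∩ U j).Nonempty}.ncard ≤ N
  measLower : ℝ≥0∞
  measLowerPos : 0 < measLower
  lower : ∀ i, measLower ≤ μ (U i)
  finiteMeas : ∀ i, μ (U i) < ⊤
  Ctilde : ℝ≥0∞
  CtildeFin : Ctilde < ⊤
  moderate : ∀ i j, (U i ∩ U j).Nonempty → μ (U i) ≤ Ctilde * μ (U j)

section YnatAux

lemma Ynat_sum_rpow_le {ι : Type*} (s : Finset ι) (z : ι → ℝ≥0∞) {pr : ℝ}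
    (hpr : 1 ≤ pr) (n : ℕ) (hcard : s.card ≤ n) :
    (∑ i ∈ s, z i) ^ pr ≤ (n : ℝ≥0∞) ^ (pr - 1) * ∑ i ∈ s, z i ^ pr := by
  rcases s.eq_empty_or_nonempty with rfl | hs
  · simp [ENNReal.zero_rpow_of_pos (lt_of_lt_of_le one_pos hpr)]
  · set c : ℝ≥0∞ := (s.card : ℝ≥0∞) with hc
    have hc0 : c ≠ 0 := by simp [hc, hs.card_pos.ne']
    have hct : c ≠ ⊤ := ENNReal.natCast_ne_top _
    have h := ENNReal.rpow_arith_mean_le_arith_mean_rpow s (fun _ => c⁻¹) z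
      (by simp [Finset.sum_const, hc]; rw [ENNReal.mul_inv_cancel hc0 hct]) hpr
    rw [← Finset.mul_sum, ← Finset.mul_sum, ENNReal.mul_rpow_of_nonneg _ _ (by linarith)] at h
    have hinv : c ^ pr * c⁻¹ ^ pr = 1 := by
      rw [← ENNReal.mul_rpow_of_nonneg _ _ (by linarith : (0:ℝ) ≤ pr),
        ENNReal.mul_inv_cancel hc0 hct, ENNReal.one_rpow]
    calc (∑ i ∈ s, z i) ^ pr = c ^ pr * (c⁻¹ ^ pr * (∑ i ∈ s, z i) ^ pr) := by
          rw [← mul_assoc, hinv, one_mul]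
      _ ≤ c ^ pr * (c⁻¹ * ∑ i ∈ s, z i ^ pr) := by exact mul_le_mul_right h _
      _ = c ^ (pr - 1) * ∑ i ∈ s, z i ^ pr := by
          rw [← mul_assoc]
          congr 1
          rw [sub_eq_add_neg, ENNReal.rpow_add _ _ hc0 hct, ENNReal.rpow_neg_one]
      _ ≤ (n : ℝ≥0∞) ^ (pr - 1) * ∑ i ∈ s, z i ^ pr := by
          exact mul_le_mul_left
            (ENNReal.rpow_le_rpow (by rw [hc]; exact_mod_cast hcard) (by linarith)) _

variable {X : Type*} [MeasurableSpace X] {μ : Measure X} {I : Type*} [Countable I]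
  {U : I → Set X} {W : X → ℝ≥0∞} {N : ℕ}

lemma Ynat_upper_bound (measU : ∀ i, MeasurableSet (U i)) (hWm : Measurable W)
    (hSx : ∀ x, {i | x ∈ U i}.Finite) (hSxcard : ∀ x, {i | x ∈ U i}.ncard ≤ N)
    (c : I → ℝ≥0∞) {pr : ℝ} (hpr : 1 ≤ pr) :
    ∫⁻ x, (∑' i, c i * (U i).indicator (fun _ => (1:ℝ≥0∞)) x * W x) ^ pr ∂μ
      ≤ (N : ℝ≥0∞) ^ (pr - 1) * ∑' i, (c i) ^ pr * ∫⁻ x in U i, W x ^ pr ∂μ := by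
  have hpr0 : (0:ℝ) < pr := lt_of_lt_of_le one_pos hpr
  have hpt : ∀ (i : I) (x : X), (c i * (U i).indicator (fun _ => (1:ℝ≥0∞)) x * W x) ^ pr
      = c i ^ pr * (U i).indicator (fun _ => (1:ℝ≥0∞)) x * W x ^ pr := by
    intro i x
    by_cases hx : x ∈ U i
    · simp only [Set.indicator_of_mem hx, mul_one]
      exact ENNReal.mul_rpow_of_nonneg _ _ hpr0.le
    · simp [Set.indicator_of_notMem hx, ENNReal.zero_rpow_of_pos hpr0]
  have key : ∀ x, (∑' i, c i * (U i).indicator (fun _ => (1:ℝ≥0∞)) x * W x) ^ pr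
      ≤ (N : ℝ≥0∞) ^ (pr - 1) * ∑' i, c i ^ pr * (U i).indicator (fun _ => (1:ℝ≥0∞)) x * W x ^ pr := by
    intro x
    have hzero : ∀ i ∉ (hSx x).toFinset, c i * (U i).indicator (fun _ => (1:ℝ≥0∞)) x * W x = 0 := by
      intro i hi
      have hxi : x ∉ U i := fun h => hi ((hSx x).mem_toFinset.mpr h)
      simp [Set.indicator_of_notMem hxi]
    rw [tsum_eq_sum hzero]
    have hcard : (hSx x).toFinset.card ≤ N := by
      rw [← Set.ncard_eq_toFinset_card _ (hSx x)]; exact hSxcard x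
    refine le_trans (Ynat_sum_rpow_le _ _ hpr N hcard) ?_
    refine mul_le_mul_right ?_ _
    refine le_trans (le_of_eq (Finset.sum_congr rfl fun i _ => hpt i x)) ?_
    exact ENNReal.sum_le_tsum _
  refine le_trans (lintegral_mono key) ?_
  rw [lintegral_const_mul' _ _ (ENNReal.rpow_ne_top_of_nonneg (by linarith) (ENNReal.natCast_ne_top N))]
  refine mul_le_mul_right (le_of_eq ?_) _
  rw [lintegral_tsum]
  · refine tsum_congr fun i => ?_
    have : ∀ x, c i ^ pr * (U i).indicator (fun _ => (1:ℝ≥0∞)) x * W x ^ pr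
        = (U i).indicator (fun x => c i ^ pr * W x ^ pr) x := by
      intro x
      by_cases hx : x ∈ U i
      · simp [Set.indicator_of_mem hx]
      · simp [Set.indicator_of_notMem hx]
    simp_rw [this]
    rw [lintegral_indicator (measU i), lintegral_const_mul'' _ ((hWm.pow_const pr).aemeasurable.restrict)]
  · intro i
    exact (((measurable_const.mul ((measurable_const.indicator (measU i)))).mul
      (hWm.pow_const pr))).aemeasurable

lemma Ynat_lower_bound (measU : ∀ i, MeasurableSet (U i)) (hWm : Measurable W)
    (hSx : ∀ x, {i | x ∈ U i}.Finite) (hSxcard : ∀ x, {i | x ∈ U i}.ncard ≤ N)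
    (c : I → ℝ≥0∞) {pr : ℝ} (hpr : 1 ≤ pr) :
    ∑' i, (c i) ^ pr * ∫⁻ x in U i, W x ^ pr ∂μ
      ≤ (N : ℝ≥0∞) * ∫⁻ x, (∑' i, c i * (U i).indicator (fun _ => (1:ℝ≥0∞)) x * W x) ^ pr ∂μ := by
  have hpr0 : (0:ℝ) < pr := lt_of_lt_of_le one_pos hpr
  set G : X → ℝ≥0∞ := fun x => ∑' i, c i * (U i).indicator (fun _ => (1:ℝ≥0∞)) x * W x with hG
  have hGm : Measurable G := by
    apply Measurable.ennreal_tsum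
    intro i
    exact (measurable_const.mul (measurable_const.indicator (measU i))).mul hWm
  have step1 : ∀ i, (c i) ^ pr * ∫⁻ x in U i, W x ^ pr ∂μ ≤ ∫⁻ x in U i, G x ^ pr ∂μ := by
    intro i
    rw [← lintegral_const_mul'' _ ((hWm.pow_const pr).aemeasurable.restrict)]
    refine setLIntegral_mono (hGm.pow_const pr) ?_
    intro x hx
    rw [← ENNReal.mul_rpow_of_nonneg _ _ hpr0.le]
    refine ENNReal.rpow_le_rpow ?_ hpr0.le
    have := ENNReal.le_tsum (f := fun i => c i * (U i).indicator (fun _ => (1:ℝ≥0∞)) x * W x) i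
    simpa [Set.indicator_of_mem hx] using this
  refine le_trans (ENNReal.tsum_le_tsum step1) ?_
  have step2 : ∑' i, ∫⁻ x in U i, G x ^ pr ∂μ
      = ∫⁻ x, ∑' i, (U i).indicator (fun y => G y ^ pr) x ∂μ := by
    rw [lintegral_tsum fun i => ((hGm.pow_const pr).indicator (measU i)).aemeasurable]
    refine tsum_congr fun i => ?_
    rw [lintegral_indicator (measU i)]
  rw [step2, ← lintegral_const_mul'' _ ((hGm.pow_const pr).aemeasurable)]
  refine lintegral_mono fun x => ?_
  have hper : ∀ i, (U i).indicator (fun y => G y ^ pr) x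
      = (U i).indicator (fun _ => (1:ℝ≥0∞)) x * (G x ^ pr) := by
    intro i; by_cases hx : x ∈ U i <;> simp [hx]
  rw [tsum_congr hper, ENNReal.tsum_mul_right]
  refine mul_le_mul_left ?_ _
  have hzero : ∀ i ∉ (hSx x).toFinset, (U i).indicator (fun _ => (1:ℝ≥0∞)) x = 0 := by
    intro i hi
    have hxi : x ∉ U i := fun h => hi ((hSx x).mem_toFinset.mpr h)
    simp [Set.indicator_of_notMem hxi]
  rw [tsum_eq_sum hzero]
  calc ∑ i ∈ (hSx x).toFinset, (U i).indicator (fun _ => (1:ℝ≥0∞)) x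
      ≤ ∑ _i ∈ (hSx x).toFinset, 1 :=
        Finset.sum_le_sum fun i _ => Set.indicator_apply_le (fun _ => le_rfl)
    _ = ((hSx x).toFinset.card : ℝ≥0∞) := by simp
    _ ≤ (N : ℝ≥0∞) := by
        have : (hSx x).toFinset.card ≤ N := by
          rw [← Set.ncard_eq_toFinset_card _ (hSx x)]; exact hSxcard x
        exact_mod_cast this

lemma Ynat_swap_le {I : Type*} [Countable I] (S : I → Set I) (hfin : ∀ i, (S i).Finite)
    (hfin2 : ∀ j, {i | j ∈ S i}.Finite) {N : ℕ} (hcard : ∀ j, {i | j ∈ S i}.ncard ≤ N)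
    (f : I → ℝ≥0∞) :
    ∑' i, ∑ j ∈ (hfin i).toFinset, f j ≤ (N : ℝ≥0∞) * ∑' j, f j := by
  classical
  have h1 : ∀ i, ∑ j ∈ (hfin i).toFinset, f j = ∑' j, (if j ∈ S i then f j else 0) := by
    intro i
    have he := tsum_eq_sum (L := SummationFilter.unconditional _) (f := fun j => if j ∈ S i then f j else 0)
      (s := (hfin i).toFinset)
      (fun j hj => if_neg (fun h => hj ((hfin i).mem_toFinset.mpr h)))
    rw [he]
    exact (Finset.sum_congr rfl fun j hj => (if_pos ((hfin i).mem_toFinset.mp hj)).symm)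
  calc ∑' i, ∑ j ∈ (hfin i).toFinset, f j
      = ∑' i, ∑' j, (if j ∈ S i then f j else 0) := tsum_congr h1
    _ = ∑' j, ∑' i, (if j ∈ S i then f j else 0) := ENNReal.tsum_comm
    _ ≤ ∑' j, (N : ℝ≥0∞) * f j := by
        refine ENNReal.tsum_le_tsum fun j => ?_
        have h2 : ∀ i ∉ (hfin2 j).toFinset, (if j ∈ S i then f j else 0) = 0 :=
          fun i hi => if_neg (fun h => hi ((hfin2 j).mem_toFinset.mpr h))
        rw [tsum_eq_sum h2]
        calc ∑ i ∈ (hfin2 j).toFinset, (if j ∈ S i then f j else 0)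
            ≤ ∑ _i ∈ (hfin2 j).toFinset, f j :=
              Finset.sum_le_sum fun i _ => by split <;> simp
          _ = ((hfin2 j).toFinset.card : ℝ≥0∞) * f j := by
              rw [Finset.sum_const, nsmul_eq_mul]
          _ ≤ (N : ℝ≥0∞) * f j := by
              refine mul_le_mul_left ?_ _
              have : (hfin2 j).toFinset.card ≤ N := by
                rw [← Set.ncard_eq_toFinset_card _ (hfin2 j)]; exact hcard j
              exact_mod_cast this
    _ = (N : ℝ≥0∞) * ∑' j, f j := ENNReal.tsum_mul_left

end YnatAux

/-- The sequence spaces `(L^p_w)^♮` are `U`-regular: the map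
`(λᵢ) ↦ (λᵢ⁺)` with `λᵢ⁺ = ∑_{j∈i*} λⱼ`, `i* = {j : Uᵢ ∩ Uⱼ ≠ ∅}`, is bounded. -/
theorem Ynatural_U_regular
    {X : Type*} [TopologicalSpace X] [T2Space X] [LocallyCompactSpace X]
    [SigmaCompactSpace X] [MeasurableSpace X] [BorelSpace X]
    (μ : MeasureTheory.Measure X) [μ.Regular] [μ.IsOpenPosMeasure]
    {I : Type*} [Countable I]
    (𝒰 : ModCover X μ I)
    (w : X → ℝ) (hw : Continuous w) (hwpos : ∀ x, 0 < w x)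
    (CmU : ℝ) (hcover : ∀ i, ∀ x ∈ 𝒰.U i, ∀ y ∈ 𝒰.U i, mw w x y ≤ CmU) :
    ∀ p : ℝ≥0∞, 1 ≤ p →
      ∃ C : ℝ≥0∞, 0 < C ∧ C < ⊤ ∧
        ∀ lam : I → ℝ, (∀ i, 0 ≤ lam i) →
          MeasureTheory.eLpNorm
              (fun x => (∑' i, (∑' j : {j : I // (𝒰.U i ∩ 𝒰.U j).Nonempty}, lam j) *
                  (μ (𝒰.U i)).toReal⁻¹ * (𝒰.U i).indicator (fun _ => (1 : ℝ)) x) * w x) p μ ≤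
            C * MeasureTheory.eLpNorm
              (fun x => (∑' i, lam i * (μ (𝒰.U i)).toReal⁻¹ *
                  (𝒰.U i).indicator (fun _ => (1 : ℝ)) x) * w x) p μ := by
  intro p hp
  -- trivial case: empty index type
  rcases isEmpty_or_nonempty I with hI | hI
  · refine ⟨1, one_pos, one_lt_top, fun lam hlam => ?_⟩
    have h0 : (fun x => (∑' i : I, (∑' j : {j : I // (𝒰.U i ∩ 𝒰.U j).Nonempty}, lam j) *
        (μ (𝒰.U i)).toReal⁻¹ * (𝒰.U i).indicator (fun _ => (1 : ℝ)) x) * w x)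
        = fun _ => (0:ℝ) := by
      funext x; rw [tsum_empty]; ring
    rw [h0, eLpNorm_zero']
    exact zero_le
  -- notation
  set ν : I → ℝ≥0∞ := fun i => μ (𝒰.U i) with hνdef
  have hν0 : ∀ i, ν i ≠ 0 := fun i => (lt_of_lt_of_le 𝒰.measLowerPos (𝒰.lower i)).ne'
  have hνt : ∀ i, ν i ≠ ⊤ := fun i => (𝒰.finiteMeas i).ne
  set W : X → ℝ≥0∞ := fun x => ENNReal.ofReal (w x) with hWdef
  have hWm : Measurable W := ENNReal.measurable_ofReal.comp hw.measurable
  have hUne : ∀ i, (𝒰.U i).Nonempty := fun i => (𝒰.interiorNonempty i).mono interior_subset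
  -- the index family facts
  set Sov : I → Set I := fun i => {j | (𝒰.U i ∩ 𝒰.U j).Nonempty} with hSovdef
  have hSovFin : ∀ i, (Sov i).Finite := by
    intro i
    refine (𝒰.overlapFin i).subset fun j hj => ?_
    rw [Set.mem_setOf_eq, Set.inter_comm]
    exact hj
  have hSovCard : ∀ i, (Sov i).ncard ≤ 𝒰.N := by
    intro i
    refine le_trans (Set.ncard_le_ncard (fun j hj => ?_) (𝒰.overlapFin i)) (𝒰.overlapBound i)
    rw [Set.mem_setOf_eq, Set.inter_comm]
    exact hj
  have hSovSymm : ∀ i j, j ∈ Sov i ↔ i ∈ Sov j := by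
    intro i j
    simp only [hSovdef, Set.mem_setOf_eq, Set.inter_comm]
  have hcov : ∀ x : X, ∃ k, x ∈ 𝒰.U k := by
    intro x
    have : x ∈ ⋃ i, 𝒰.U i := by rw [𝒰.covers]; exact Set.mem_univ x
    exact Set.mem_iUnion.mp this
  have hSxsub : ∀ x : X, ∀ k, x ∈ 𝒰.U k → {i | x ∈ 𝒰.U i} ⊆ Sov k := by
    intro x k hk i hi
    exact ⟨x, hk, hi⟩
  have hSx : ∀ x : X, {i | x ∈ 𝒰.U i}.Finite := by
    intro x
    obtain ⟨k, hk⟩ := hcov x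
    exact (hSovFin k).subset (hSxsub x k hk)
  have hSxcard : ∀ x : X, {i | x ∈ 𝒰.U i}.ncard ≤ 𝒰.N := by
    intro x
    obtain ⟨k, hk⟩ := hcov x
    exact le_trans (Set.ncard_le_ncard (hSxsub x k hk) (hSovFin k)) (hSovCard k)
  -- basic constants
  have hCmU1 : 1 ≤ CmU := by
    obtain ⟨x, hx⟩ := hUne (Classical.arbitrary I)
    have h := hcover _ x hx x hx
    rw [mw, div_self (hwpos x).ne', max_self] at h
    exact h
  set Cm : ℝ≥0∞ := ENNReal.ofReal CmU with hCmdef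
  have hCm1 : 1 ≤ Cm := by rwa [hCmdef, ENNReal.one_le_ofReal]
  have hCmt : Cm ≠ ⊤ := ENNReal.ofReal_ne_top
  have hCm0 : Cm ≠ 0 := fun h => by simp [h] at hCm1
  set Ct : ℝ≥0∞ := 𝒰.Ctilde with hCtdef
  have hCtt : Ct ≠ ⊤ := 𝒰.CtildeFin.ne
  have hCt1 : 1 ≤ Ct := by
    set i0 := Classical.arbitrary I
    have hmm := 𝒰.moderate i0 i0 (by rw [Set.inter_self]; exact hUne i0)
    have h2 : 1 * ν i0 ≤ Ct * ν i0 := by rwa [one_mul]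
    exact (ENNReal.mul_le_mul_iff_left (hν0 i0) (hνt i0)).mp h2
  have hCt0 : Ct ≠ 0 := fun h => by simp [h] at hCt1
  set Nr : ℝ≥0∞ := (𝒰.N : ℝ≥0∞) with hNrdef
  have hNrt : Nr ≠ ⊤ := ENNReal.natCast_ne_top _
  have hN1 : 1 ≤ 𝒰.N := by
    set i0 := Classical.arbitrary I
    have hmem : i0 ∈ Sov i0 := by rw [hSovdef, Set.mem_setOf_eq, Set.inter_self]; exact hUne i0
    have : 0 < (Sov i0).ncard := (Set.ncard_pos (hSovFin i0)).mpr ⟨i0, hmem⟩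
    exact le_trans this (hSovCard i0)
  have hNr1 : 1 ≤ Nr := by rw [hNrdef]; exact_mod_cast hN1
  have hNr0 : Nr ≠ 0 := fun h => by simp [h] at hNr1
  -- the pointwise weight comparison
  have hWcomp : ∀ i j, (𝒰.U i ∩ 𝒰.U j).Nonempty →
      ∀ x ∈ 𝒰.U i, ∀ y ∈ 𝒰.U j, W x ≤ Cm * Cm * W y := by
    intro i j hne x hx y hy
    obtain ⟨z, hzi, hzj⟩ := hne
    have h1 : w x ≤ CmU * w z := by
      have := le_trans (le_max_left _ _) (hcover i x hx z hzi)
      exact (div_le_iff₀ (hwpos z)).mp this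
    have h2 : w z ≤ CmU * w y := by
      have := le_trans (le_max_left _ _) (hcover j z hzj y hy)
      exact (div_le_iff₀ (hwpos y)).mp this
    have h3 : w x ≤ CmU * CmU * w y := by nlinarith [hwpos z, hwpos y]
    calc W x ≤ ENNReal.ofReal (CmU * CmU * w y) := ENNReal.ofReal_le_ofReal h3
      _ = Cm * Cm * W y := by
          rw [ENNReal.ofReal_mul (by nlinarith), ENNReal.ofReal_mul (by linarith)]
  -- the enorm of the relevant functions
  have hofRealInv : ∀ i, ENNReal.ofReal (μ (𝒰.U i)).toReal⁻¹ = (ν i)⁻¹ := by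
    intro i
    rw [← ENNReal.toReal_inv, ENNReal.ofReal_toReal (ENNReal.inv_ne_top.mpr (hν0 i))]
  have hen : ∀ (c : I → ℝ), (∀ i, 0 ≤ c i) → ∀ x : X,
      ((‖(∑' i, c i * (μ (𝒰.U i)).toReal⁻¹ * (𝒰.U i).indicator (fun _ => (1:ℝ)) x) * w x‖₊ : ℝ≥0∞))
        = ∑' i, ENNReal.ofReal (c i) * (ν i)⁻¹ * (𝒰.U i).indicator (fun _ => (1:ℝ≥0∞)) x * W x := by
    intro c hc x
    have hnn : ∀ i, 0 ≤ c i * (μ (𝒰.U i)).toReal⁻¹ * (𝒰.U i).indicator (fun _ => (1:ℝ)) x :=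
      fun i => mul_nonneg (mul_nonneg (hc i) (inv_nonneg.mpr ENNReal.toReal_nonneg))
        (Set.indicator_apply_nonneg fun _ => zero_le_one)
    have hsum : Summable (fun i => c i * (μ (𝒰.U i)).toReal⁻¹ *
        (𝒰.U i).indicator (fun _ => (1:ℝ)) x) := by
      refine summable_of_ne_finset_zero (s := (hSx x).toFinset) fun i hi => ?_
      have hxi : x ∉ 𝒰.U i := fun h => hi ((hSx x).mem_toFinset.mpr h)
      rw [Set.indicator_of_notMem hxi, mul_zero]
    rw [nnnorm_mul, ENNReal.coe_mul, ← enorm_eq_nnnorm, Real.enorm_eq_ofReal (tsum_nonneg hnn),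
      ← enorm_eq_nnnorm, Real.enorm_eq_ofReal (hwpos x).le, ENNReal.ofReal_tsum_of_nonneg hnn hsum,
      ← ENNReal.tsum_mul_right]
    refine tsum_congr fun i => ?_
    rw [ENNReal.ofReal_mul (mul_nonneg (hc i) (inv_nonneg.mpr ENNReal.toReal_nonneg)),
      ENNReal.ofReal_mul (hc i), hofRealInv]
    congr 1
    by_cases hxi : x ∈ 𝒰.U i
    · simp [Set.indicator_of_mem hxi]
    · simp [Set.indicator_of_notMem hxi]
  haveI hFinSub : ∀ i, Finite {j : I // (𝒰.U i ∩ 𝒰.U j).Nonempty} :=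
    fun i => (hSovFin i).to_subtype
  rcases eq_or_ne p ⊤ with rfl | hpt
  · -- the case `p = ∞`
    refine ⟨Nr * Nr * (Cm * Cm * Ct), ?_, ?_, ?_⟩
    · rw [pos_iff_ne_zero]
      exact mul_ne_zero (mul_ne_zero hNr0 hNr0) (mul_ne_zero (mul_ne_zero hCm0 hCm0) hCt0)
    · exact ENNReal.mul_lt_top (ENNReal.mul_lt_top hNrt.lt_top hNrt.lt_top)
        (ENNReal.mul_lt_top (ENNReal.mul_lt_top hCmt.lt_top hCmt.lt_top) hCtt.lt_top)
    · intro lam hlam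
      set L : I → ℝ≥0∞ := fun i => ENNReal.ofReal (lam i) with hLdef
      set g : X → ℝ := fun x => (∑' i, lam i * (μ (𝒰.U i)).toReal⁻¹ *
          (𝒰.U i).indicator (fun _ => (1 : ℝ)) x) * w x with hgdef
      set S : ℝ≥0∞ := essSup (fun x => (‖g x‖₊ : ℝ≥0∞)) μ with hSdef
      have heLg : eLpNorm g ⊤ μ = S := by rw [eLpNorm_exponent_top]; rfl
      -- a point in `U j` realizing the essential sup bound
      have hGy : ∀ j, ∃ y ∈ 𝒰.U j, L j * (ν j)⁻¹ * W y ≤ S := by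
        intro j
        have hres : μ.restrict (𝒰.U j) ≠ 0 := by
          rw [Ne, Measure.restrict_eq_zero]; exact hν0 j
        haveI : (ae (μ.restrict (𝒰.U j))).NeBot := ae_neBot.mpr hres
        have h1 : ∀ᵐ y ∂μ.restrict (𝒰.U j), y ∈ 𝒰.U j := ae_restrict_mem (𝒰.measU j)
        have h2 : ∀ᵐ y ∂μ.restrict (𝒰.U j), (‖g y‖₊ : ℝ≥0∞) ≤ S :=
          ae_restrict_of_ae (ENNReal.ae_le_essSup _)
        obtain ⟨y, hyU, hyS⟩ := (h1.and h2).exists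
        refine ⟨y, hyU, le_trans ?_ hyS⟩
        rw [hgdef]
        rw [hen lam hlam y]
        have := ENNReal.le_tsum (f := fun i => ENNReal.ofReal (lam i) * (ν i)⁻¹ *
          (𝒰.U i).indicator (fun _ => (1:ℝ≥0∞)) y * W y) j
        simpa [Set.indicator_of_mem hyU] using this
      have hkey : ∀ i j, j ∈ Sov i → ∀ x ∈ 𝒰.U i,
          L j * (ν i)⁻¹ * W x ≤ Cm * Cm * Ct * S := by
        intro i j hij x hx
        have hij' : (𝒰.U i ∩ 𝒰.U j).Nonempty := hij
        obtain ⟨y, hyU, hyS⟩ := hGy j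
        have hνji : ν j ≤ Ct * ν i := 𝒰.moderate j i (by rwa [Set.inter_comm])
        have hinv : (ν i)⁻¹ ≤ Ct * (ν j)⁻¹ := by
          calc (ν i)⁻¹ = (ν j)⁻¹ * ν j * (ν i)⁻¹ := by
                rw [ENNReal.inv_mul_cancel (hν0 j) (hνt j), one_mul]
            _ ≤ (ν j)⁻¹ * (Ct * ν i) * (ν i)⁻¹ :=
                mul_le_mul_left (mul_le_mul_right hνji _) _
            _ = Ct * (ν j)⁻¹ * (ν i * (ν i)⁻¹) := by ring
            _ = Ct * (ν j)⁻¹ := by rw [ENNReal.mul_inv_cancel (hν0 i) (hνt i), mul_one]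
        have hWx : W x ≤ Cm * Cm * W y := hWcomp i j hij' x hx y hyU
        calc L j * (ν i)⁻¹ * W x ≤ L j * (Ct * (ν j)⁻¹) * (Cm * Cm * W y) :=
              mul_le_mul' (mul_le_mul_right hinv _) hWx
          _ = (Cm * Cm * Ct) * (L j * (ν j)⁻¹ * W y) := by ring
          _ ≤ (Cm * Cm * Ct) * S := mul_le_mul_right hyS _
      -- conversion of the inner sums
      have hLpE : ∀ i, ENNReal.ofReal (∑' j : {j : I // (𝒰.U i ∩ 𝒰.U j).Nonempty}, lam ↑j)
          = ∑ j ∈ (hSovFin i).toFinset, L j := by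
        intro i
        have hof := ENNReal.ofReal_tsum_of_nonneg
          (f := fun j : {j : I // (𝒰.U i ∩ 𝒰.U j).Nonempty} => lam ↑j)
          (fun j => hlam ↑j) Summable.of_finite
        rw [hof]
        refine ((tsum_subtype (Sov i) L).trans ?_)
        have hz : ∀ j ∉ (hSovFin i).toFinset, (Sov i).indicator L j = 0 := fun j hj =>
          Set.indicator_of_notMem (fun h => hj ((hSovFin i).mem_toFinset.mpr h)) L
        rw [tsum_eq_sum hz]
        exact Finset.sum_congr rfl fun j hj =>
          Set.indicator_of_mem ((hSovFin i).mem_toFinset.mp hj) L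
      rw [eLpNorm_exponent_top, heLg]
      have hbound : ∀ x : X,
          (‖(∑' i, (∑' j : {j : I // (𝒰.U i ∩ 𝒰.U j).Nonempty}, lam ↑j) *
            (μ (𝒰.U i)).toReal⁻¹ * (𝒰.U i).indicator (fun _ => (1 : ℝ)) x) * w x‖₊ : ℝ≥0∞)
            ≤ Nr * Nr * (Cm * Cm * Ct) * S := by
        intro x
        refine le_trans (le_of_eq (hen
          (fun i => ∑' j : {j : I // (𝒰.U i ∩ 𝒰.U j).Nonempty}, lam ↑j)
          (fun i => tsum_nonneg fun j => hlam ↑j) x)) ?_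
        have hzero : ∀ i ∉ (hSx x).toFinset,
            ENNReal.ofReal (∑' j : {j : I // (𝒰.U i ∩ 𝒰.U j).Nonempty}, lam ↑j) * (ν i)⁻¹ *
              (𝒰.U i).indicator (fun _ => (1:ℝ≥0∞)) x * W x = 0 := by
          intro i hi
          have hxi : x ∉ 𝒰.U i := fun h => hi ((hSx x).mem_toFinset.mpr h)
          simp [Set.indicator_of_notMem hxi]
        rw [tsum_eq_sum hzero]
        have hterm : ∀ i ∈ (hSx x).toFinset,
            ENNReal.ofReal (∑' j : {j : I // (𝒰.U i ∩ 𝒰.U j).Nonempty}, lam ↑j) * (ν i)⁻¹ *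
              (𝒰.U i).indicator (fun _ => (1:ℝ≥0∞)) x * W x
            ≤ Nr * (Cm * Cm * Ct * S) := by
          intro i hi
          have hxi : x ∈ 𝒰.U i := (hSx x).mem_toFinset.mp hi
          rw [hLpE i, Set.indicator_of_mem hxi, mul_one, Finset.sum_mul, Finset.sum_mul]
          calc ∑ j ∈ (hSovFin i).toFinset, L j * (ν i)⁻¹ * W x
              ≤ ∑ _j ∈ (hSovFin i).toFinset, (Cm * Cm * Ct * S) := by
                refine Finset.sum_le_sum fun j hj => ?_
                exact hkey i j ((hSovFin i).mem_toFinset.mp hj) x hxi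
            _ = ((hSovFin i).toFinset.card : ℝ≥0∞) * (Cm * Cm * Ct * S) := by
                rw [Finset.sum_const, nsmul_eq_mul]
            _ ≤ Nr * (Cm * Cm * Ct * S) := by
                refine mul_le_mul_left ?_ _
                rw [hNrdef]
                have : (hSovFin i).toFinset.card ≤ 𝒰.N := by
                  rw [← Set.ncard_eq_toFinset_card _ (hSovFin i)]; exact hSovCard i
                exact_mod_cast this
        calc ∑ i ∈ (hSx x).toFinset, _ ≤ ∑ _i ∈ (hSx x).toFinset, Nr * (Cm * Cm * Ct * S) :=
              Finset.sum_le_sum hterm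
          _ = ((hSx x).toFinset.card : ℝ≥0∞) * (Nr * (Cm * Cm * Ct * S)) := by
              rw [Finset.sum_const, nsmul_eq_mul]
          _ ≤ Nr * (Nr * (Cm * Cm * Ct * S)) := by
              refine mul_le_mul_left ?_ _
              rw [hNrdef]
              have : (hSx x).toFinset.card ≤ 𝒰.N := by
                rw [← Set.ncard_eq_toFinset_card _ (hSx x)]; exact hSxcard x
              exact_mod_cast this
          _ = Nr * Nr * (Cm * Cm * Ct) * S := by ring
      exact essSup_le_of_ae_le _ (Filter.Eventually.of_forall hbound)
  -- the case `p < ∞`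
  have hp0 : p ≠ 0 := (lt_of_lt_of_le one_pos hp).ne'
  obtain ⟨pr, hprdef⟩ : ∃ pr : ℝ, p.toReal = pr := ⟨_, rfl⟩
  have hpr1 : 1 ≤ pr := by
    rw [← hprdef, ← ENNReal.toReal_one]
    exact ENNReal.toReal_mono hpt hp
  have hpr0 : (0:ℝ) < pr := lt_of_lt_of_le one_pos hpr1
  have hfin2 : ∀ j, {i | j ∈ Sov i}.Finite :=
    fun j => (hSovFin j).subset fun i hi => (hSovSymm i j).mp hi
  have hcard2 : ∀ j, {i | j ∈ Sov i}.ncard ≤ 𝒰.N := fun j =>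
    le_trans (Set.ncard_le_ncard (fun i hi => (hSovSymm i j).mp hi) (hSovFin j)) (hSovCard j)
  -- the comparison of the local quantities over neighbouring sets
  have hcompPair : ∀ i j, j ∈ Sov i →
      ((ν i)⁻¹) ^ pr * ∫⁻ x in 𝒰.U i, W x ^ pr ∂μ
        ≤ (Cm * Cm) ^ pr * Ct ^ (pr - 1) *
          (((ν j)⁻¹) ^ pr * ∫⁻ x in 𝒰.U j, W x ^ pr ∂μ) := by
    intro i j hij
    have hij' : (𝒰.U i ∩ 𝒰.U j).Nonempty := hij
    have hνji : ν j ≤ Ct * ν i := 𝒰.moderate j i (by rwa [Set.inter_comm])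
    have hIi_le : ∀ y ∈ 𝒰.U j, (∫⁻ x in 𝒰.U i, W x ^ pr ∂μ)
        ≤ (Cm * Cm) ^ pr * W y ^ pr * ν i := by
      intro y hy
      have hpoint : ∀ x ∈ 𝒰.U i, W x ^ pr ≤ (Cm * Cm) ^ pr * W y ^ pr := by
        intro x hx
        calc W x ^ pr ≤ (Cm * Cm * W y) ^ pr :=
              ENNReal.rpow_le_rpow (hWcomp i j hij' x hx y hy) hpr0.le
          _ = (Cm * Cm) ^ pr * W y ^ pr := ENNReal.mul_rpow_of_nonneg _ _ hpr0.le
      calc (∫⁻ x in 𝒰.U i, W x ^ pr ∂μ)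
          ≤ ∫⁻ _x in 𝒰.U i, (Cm * Cm) ^ pr * W y ^ pr ∂μ :=
            setLIntegral_mono measurable_const hpoint
        _ = (Cm * Cm) ^ pr * W y ^ pr * ν i := setLIntegral_const _ _
    have hKw : ν j * ∫⁻ x in 𝒰.U i, W x ^ pr ∂μ
        ≤ (Cm * Cm) ^ pr * (ν i * ∫⁻ x in 𝒰.U j, W x ^ pr ∂μ) := by
      have h1 : (∫⁻ x in 𝒰.U i, W x ^ pr ∂μ) * ν j
          ≤ ∫⁻ y in 𝒰.U j, (Cm * Cm) ^ pr * W y ^ pr * ν i ∂μ := by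
        rw [← setLIntegral_const (𝒰.U j) (∫⁻ x in 𝒰.U i, W x ^ pr ∂μ)]
        exact setLIntegral_mono
          ((measurable_const.mul (hWm.pow_const pr)).mul measurable_const) hIi_le
      have h2 : (∫⁻ y in 𝒰.U j, (Cm * Cm) ^ pr * W y ^ pr * ν i ∂μ)
          = (Cm * Cm) ^ pr * ν i * ∫⁻ y in 𝒰.U j, W y ^ pr ∂μ := by
        have he : ∀ y : X, (Cm * Cm) ^ pr * W y ^ pr * ν i
            = ((Cm * Cm) ^ pr * ν i) * W y ^ pr := fun y => by ring
        simp_rw [he]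
        rw [lintegral_const_mul'' _ ((hWm.pow_const pr).aemeasurable.restrict)]
      calc ν j * ∫⁻ x in 𝒰.U i, W x ^ pr ∂μ
          = (∫⁻ x in 𝒰.U i, W x ^ pr ∂μ) * ν j := mul_comm _ _
        _ ≤ (Cm * Cm) ^ pr * ν i * ∫⁻ y in 𝒰.U j, W y ^ pr ∂μ := h1.trans (le_of_eq h2)
        _ = (Cm * Cm) ^ pr * (ν i * ∫⁻ x in 𝒰.U j, W x ^ pr ∂μ) := by ring
    have hai0 : (ν i) ^ pr ≠ 0 := (ENNReal.rpow_pos (pos_iff_ne_zero.mpr (hν0 i)) (hνt i)).ne'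
    have hait : (ν i) ^ pr ≠ ⊤ := ENNReal.rpow_ne_top_of_nonneg hpr0.le (hνt i)
    have haj0 : (ν j) ^ pr ≠ 0 := (ENNReal.rpow_pos (pos_iff_ne_zero.mpr (hν0 j)) (hνt j)).ne'
    have hajt : (ν j) ^ pr ≠ ⊤ := ENNReal.rpow_ne_top_of_nonneg hpr0.le (hνt j)
    have e1 : ∀ k : I, (ν k) ^ pr = ν k ^ (pr - 1) * ν k := by
      intro k
      conv_lhs => rw [show pr = (pr - 1) + 1 by ring]
      rw [ENNReal.rpow_add _ _ (hν0 k) (hνt k), ENNReal.rpow_one]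
    have h4 : (ν j) ^ pr * ∫⁻ x in 𝒰.U i, W x ^ pr ∂μ
        ≤ (Cm * Cm) ^ pr * Ct ^ (pr - 1) *
          ((ν i) ^ pr * ∫⁻ x in 𝒰.U j, W x ^ pr ∂μ) := by
      calc (ν j) ^ pr * ∫⁻ x in 𝒰.U i, W x ^ pr ∂μ
          = ν j ^ (pr - 1) * (ν j * ∫⁻ x in 𝒰.U i, W x ^ pr ∂μ) := by rw [e1 j]; ring
        _ ≤ (Ct * ν i) ^ (pr - 1) *
            ((Cm * Cm) ^ pr * (ν i * ∫⁻ x in 𝒰.U j, W x ^ pr ∂μ)) :=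
            mul_le_mul' (ENNReal.rpow_le_rpow hνji (by linarith)) hKw
        _ = Ct ^ (pr - 1) * ν i ^ (pr - 1) *
            ((Cm * Cm) ^ pr * (ν i * ∫⁻ x in 𝒰.U j, W x ^ pr ∂μ)) := by
            rw [ENNReal.mul_rpow_of_nonneg _ _ (by linarith : (0:ℝ) ≤ pr - 1)]
        _ = (Cm * Cm) ^ pr * Ct ^ (pr - 1) *
            ((ν i ^ (pr - 1) * ν i) * ∫⁻ x in 𝒰.U j, W x ^ pr ∂μ) := by ring
        _ = (Cm * Cm) ^ pr * Ct ^ (pr - 1) *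
            ((ν i) ^ pr * ∫⁻ x in 𝒰.U j, W x ^ pr ∂μ) := by rw [← e1 i]
    rw [ENNReal.inv_rpow, ENNReal.inv_rpow]
    calc ((ν i) ^ pr)⁻¹ * ∫⁻ x in 𝒰.U i, W x ^ pr ∂μ
        = ((ν i) ^ pr)⁻¹ * (((ν j) ^ pr)⁻¹ * ((ν j) ^ pr * ∫⁻ x in 𝒰.U i, W x ^ pr ∂μ)) := by
          rw [← mul_assoc (((ν j) ^ pr)⁻¹), ENNReal.inv_mul_cancel haj0 hajt, one_mul]
      _ ≤ ((ν i) ^ pr)⁻¹ * (((ν j) ^ pr)⁻¹ * ((Cm * Cm) ^ pr * Ct ^ (pr - 1) *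
            ((ν i) ^ pr * ∫⁻ x in 𝒰.U j, W x ^ pr ∂μ))) :=
          mul_le_mul_right (mul_le_mul_right h4 _) _
      _ = (((ν i) ^ pr)⁻¹ * (ν i) ^ pr) * ((Cm * Cm) ^ pr * Ct ^ (pr - 1) *
            (((ν j) ^ pr)⁻¹ * ∫⁻ x in 𝒰.U j, W x ^ pr ∂μ)) := by ring
      _ = (Cm * Cm) ^ pr * Ct ^ (pr - 1) *
            (((ν j) ^ pr)⁻¹ * ∫⁻ x in 𝒰.U j, W x ^ pr ∂μ) := by
          rw [ENNReal.inv_mul_cancel hai0 hait, one_mul]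
  -- the constant
  set D : ℝ≥0∞ := Nr ^ (pr - 1) *
    (Nr ^ (pr - 1) * ((Cm * Cm) ^ pr * Ct ^ (pr - 1)) * (Nr * Nr)) with hDdef
  have hD0 : D ≠ 0 := by
    have h1 : Nr ^ (pr - 1) ≠ 0 := (ENNReal.rpow_pos (pos_iff_ne_zero.mpr hNr0) hNrt).ne'
    have h2 : (Cm * Cm) ^ pr ≠ 0 :=
      (ENNReal.rpow_pos (pos_iff_ne_zero.mpr (mul_ne_zero hCm0 hCm0))
        (ENNReal.mul_ne_top hCmt hCmt)).ne'
    have h3 : Ct ^ (pr - 1) ≠ 0 := (ENNReal.rpow_pos (pos_iff_ne_zero.mpr hCt0) hCtt).ne'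
    exact mul_ne_zero h1 (mul_ne_zero (mul_ne_zero h1 (mul_ne_zero h2 h3))
      (mul_ne_zero hNr0 hNr0))
  have hDt : D ≠ ⊤ := by
    have h1 : Nr ^ (pr - 1) ≠ ⊤ := ENNReal.rpow_ne_top_of_nonneg (by linarith) hNrt
    have h2 : (Cm * Cm) ^ pr ≠ ⊤ :=
      ENNReal.rpow_ne_top_of_nonneg hpr0.le (ENNReal.mul_ne_top hCmt hCmt)
    have h3 : Ct ^ (pr - 1) ≠ ⊤ := ENNReal.rpow_ne_top_of_nonneg (by linarith) hCtt
    exact ENNReal.mul_ne_top h1 (ENNReal.mul_ne_top (ENNReal.mul_ne_top h1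
      (ENNReal.mul_ne_top h2 h3)) (ENNReal.mul_ne_top hNrt hNrt))
  refine ⟨D ^ (1/pr), ENNReal.rpow_pos (pos_iff_ne_zero.mpr hD0) hDt,
    ENNReal.rpow_lt_top_of_nonneg (by positivity) hDt, ?_⟩
  intro lam hlam
  set L : I → ℝ≥0∞ := fun i => ENNReal.ofReal (lam i) with hLdef
  have hLpE : ∀ i, ENNReal.ofReal (∑' j : {j : I // (𝒰.U i ∩ 𝒰.U j).Nonempty}, lam ↑j)
      = ∑ j ∈ (hSovFin i).toFinset, L j := by
    intro i
    have hof := ENNReal.ofReal_tsum_of_nonneg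
      (f := fun j : {j : I // (𝒰.U i ∩ 𝒰.U j).Nonempty} => lam ↑j)
      (fun j => hlam ↑j) Summable.of_finite
    rw [hof]
    refine ((tsum_subtype (Sov i) L).trans ?_)
    have hz : ∀ j ∉ (hSovFin i).toFinset, (Sov i).indicator L j = 0 := fun j hj =>
      Set.indicator_of_notMem (fun h => hj ((hSovFin i).mem_toFinset.mpr h)) L
    rw [tsum_eq_sum hz]
    exact Finset.sum_congr rfl fun j hj =>
      Set.indicator_of_mem ((hSovFin i).mem_toFinset.mp hj) L
  have hfi : ∫⁻ x, (‖(∑' i, (∑' j : {j : I // (𝒰.U i ∩ 𝒰.U j).Nonempty}, lam ↑j) *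
        (μ (𝒰.U i)).toReal⁻¹ * (𝒰.U i).indicator (fun _ => (1 : ℝ)) x) * w x‖₊ : ℝ≥0∞) ^ pr ∂μ
      = ∫⁻ x, (∑' i, ((∑ j ∈ (hSovFin i).toFinset, L j) * (ν i)⁻¹) *
          (𝒰.U i).indicator (fun _ => (1:ℝ≥0∞)) x * W x) ^ pr ∂μ := by
    refine lintegral_congr fun x => ?_
    congr 1
    refine (hen (fun i => ∑' j : {j : I // (𝒰.U i ∩ 𝒰.U j).Nonempty}, lam ↑j)
      (fun i => tsum_nonneg fun j => hlam ↑j) x).trans ?_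
    exact tsum_congr fun i => by rw [hLpE i]
  have hgi : ∫⁻ x, (‖(∑' i, lam i * (μ (𝒰.U i)).toReal⁻¹ *
        (𝒰.U i).indicator (fun _ => (1 : ℝ)) x) * w x‖₊ : ℝ≥0∞) ^ pr ∂μ
      = ∫⁻ x, (∑' i, (L i * (ν i)⁻¹) *
          (𝒰.U i).indicator (fun _ => (1:ℝ≥0∞)) x * W x) ^ pr ∂μ := by
    refine lintegral_congr fun x => ?_
    congr 1
    exact hen lam hlam x
  -- middle combinatorial estimate
  have hmid : ∑' i, ((∑ j ∈ (hSovFin i).toFinset, L j) * (ν i)⁻¹) ^ pr *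
        ∫⁻ x in 𝒰.U i, W x ^ pr ∂μ
      ≤ Nr ^ (pr - 1) * ((Cm * Cm) ^ pr * Ct ^ (pr - 1)) *
        (Nr * ∑' j, (L j * (ν j)⁻¹) ^ pr * ∫⁻ x in 𝒰.U j, W x ^ pr ∂μ) := by
    calc ∑' i, ((∑ j ∈ (hSovFin i).toFinset, L j) * (ν i)⁻¹) ^ pr *
          ∫⁻ x in 𝒰.U i, W x ^ pr ∂μ
        = ∑' i, (∑ j ∈ (hSovFin i).toFinset, L j) ^ pr *
            (((ν i)⁻¹) ^ pr * ∫⁻ x in 𝒰.U i, W x ^ pr ∂μ) := by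
          refine tsum_congr fun i => ?_
          rw [ENNReal.mul_rpow_of_nonneg _ _ hpr0.le]; ring
      _ ≤ ∑' i, (Nr ^ (pr - 1) * ∑ j ∈ (hSovFin i).toFinset, L j ^ pr) *
            (((ν i)⁻¹) ^ pr * ∫⁻ x in 𝒰.U i, W x ^ pr ∂μ) := by
          refine ENNReal.tsum_le_tsum fun i => mul_le_mul_left ?_ _
          refine Ynat_sum_rpow_le _ _ hpr1 𝒰.N ?_
          rw [← Set.ncard_eq_toFinset_card _ (hSovFin i)]; exact hSovCard i
      _ = Nr ^ (pr - 1) * ∑' i, ∑ j ∈ (hSovFin i).toFinset, L j ^ pr *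
            (((ν i)⁻¹) ^ pr * ∫⁻ x in 𝒰.U i, W x ^ pr ∂μ) := by
          rw [← ENNReal.tsum_mul_left]
          refine tsum_congr fun i => ?_
          rw [mul_assoc, Finset.sum_mul]
      _ ≤ Nr ^ (pr - 1) * ∑' i, ∑ j ∈ (hSovFin i).toFinset, L j ^ pr *
            ((Cm * Cm) ^ pr * Ct ^ (pr - 1) *
              (((ν j)⁻¹) ^ pr * ∫⁻ x in 𝒰.U j, W x ^ pr ∂μ)) := by
          refine mul_le_mul_right (ENNReal.tsum_le_tsum fun i =>
            Finset.sum_le_sum fun j hj => mul_le_mul_right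
              (hcompPair i j ((hSovFin i).mem_toFinset.mp hj)) _) _
      _ = Nr ^ (pr - 1) * ((Cm * Cm) ^ pr * Ct ^ (pr - 1)) *
            ∑' i, ∑ j ∈ (hSovFin i).toFinset, L j ^ pr *
              (((ν j)⁻¹) ^ pr * ∫⁻ x in 𝒰.U j, W x ^ pr ∂μ) := by
          rw [mul_assoc]
          congr 1
          rw [← ENNReal.tsum_mul_left]
          refine tsum_congr fun i => ?_
          rw [Finset.mul_sum]
          exact Finset.sum_congr rfl fun j _ => by ring
      _ ≤ Nr ^ (pr - 1) * ((Cm * Cm) ^ pr * Ct ^ (pr - 1)) *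
            (Nr * ∑' j, L j ^ pr * (((ν j)⁻¹) ^ pr * ∫⁻ x in 𝒰.U j, W x ^ pr ∂μ)) :=
          mul_le_mul_right (Ynat_swap_le Sov hSovFin hfin2 hcard2 _) _
      _ = Nr ^ (pr - 1) * ((Cm * Cm) ^ pr * Ct ^ (pr - 1)) *
            (Nr * ∑' j, (L j * (ν j)⁻¹) ^ pr * ∫⁻ x in 𝒰.U j, W x ^ pr ∂μ) := by
          congr 2
          refine tsum_congr fun j => ?_
          rw [ENNReal.mul_rpow_of_nonneg _ _ hpr0.le]; ring
  -- put everything together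
  rw [eLpNorm_eq_lintegral_rpow_enorm_toReal hp0 hpt, eLpNorm_eq_lintegral_rpow_enorm_toReal hp0 hpt]
  simp only [enorm_eq_nnnorm]
  rw [hprdef, hfi, hgi]
  have hA : ∫⁻ x, (∑' i, ((∑ j ∈ (hSovFin i).toFinset, L j) * (ν i)⁻¹) *
        (𝒰.U i).indicator (fun _ => (1:ℝ≥0∞)) x * W x) ^ pr ∂μ
      ≤ D * ∫⁻ x, (∑' i, (L i * (ν i)⁻¹) *
          (𝒰.U i).indicator (fun _ => (1:ℝ≥0∞)) x * W x) ^ pr ∂μ := by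
    calc ∫⁻ x, (∑' i, ((∑ j ∈ (hSovFin i).toFinset, L j) * (ν i)⁻¹) *
          (𝒰.U i).indicator (fun _ => (1:ℝ≥0∞)) x * W x) ^ pr ∂μ
        ≤ Nr ^ (pr - 1) * ∑' i, ((∑ j ∈ (hSovFin i).toFinset, L j) * (ν i)⁻¹) ^ pr *
            ∫⁻ x in 𝒰.U i, W x ^ pr ∂μ :=
          Ynat_upper_bound 𝒰.measU hWm hSx hSxcard _ hpr1
      _ ≤ Nr ^ (pr - 1) * (Nr ^ (pr - 1) * ((Cm * Cm) ^ pr * Ct ^ (pr - 1)) *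
            (Nr * ∑' j, (L j * (ν j)⁻¹) ^ pr * ∫⁻ x in 𝒰.U j, W x ^ pr ∂μ)) :=
          mul_le_mul_right hmid _
      _ ≤ Nr ^ (pr - 1) * (Nr ^ (pr - 1) * ((Cm * Cm) ^ pr * Ct ^ (pr - 1)) *
            (Nr * (Nr * ∫⁻ x, (∑' i, (L i * (ν i)⁻¹) *
              (𝒰.U i).indicator (fun _ => (1:ℝ≥0∞)) x * W x) ^ pr ∂μ))) := by
          refine mul_le_mul_right (mul_le_mul_right (mul_le_mul_right ?_ _) _) _
          exact Ynat_lower_bound 𝒰.measU hWm hSx hSxcard _ hpr1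
      _ = D * ∫⁻ x, (∑' i, (L i * (ν i)⁻¹) *
            (𝒰.U i).indicator (fun _ => (1:ℝ≥0∞)) x * W x) ^ pr ∂μ := by
          rw [hDdef]; ring
  calc (∫⁻ x, (∑' i, ((∑ j ∈ (hSovFin i).toFinset, L j) * (ν i)⁻¹) *
        (𝒰.U i).indicator (fun _ => (1:ℝ≥0∞)) x * W x) ^ pr ∂μ) ^ (1/pr)
      ≤ (D * ∫⁻ x, (∑' i, (L i * (ν i)⁻¹) *
          (𝒰.U i).indicator (fun _ => (1:ℝ≥0∞)) x * W x) ^ pr ∂μ) ^ (1/pr) :=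
        ENNReal.rpow_le_rpow hA (by positivity)
    _ = D ^ (1/pr) * (∫⁻ x, (∑' i, (L i * (ν i)⁻¹) *
          (𝒰.U i).indicator (fun _ => (1:ℝ≥0∞)) x * W x) ^ pr ∂μ) ^ (1/pr) :=
        ENNReal.mul_rpow_of_nonneg _ _ (by positivity)
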